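/- Let m and n_yq be natural numbers with n_yq ≤ m, Θ_w = diag_m(J), Θ_yq = diag_{n_yq}(J). If a real 2n_yq×2m matrix D_q satisfies D_q·Θ_w·D_qᵀ = Θ_yq, then there exists a real (2m−2n_yq)×2m matrix N such that the stacked 2m×2m matrix Ṽ = [D_q; N] is symplectic, i.e. Ṽ·Θ_w·Ṽᵀ = Θ_w. -/

import Mathlib

open Matrix

/-- The 2×2 real matrix `J = [[0,1],[-1,0]]`. -/
def Jmat : Matrix (Fin 2) (Fin 2) ℝ := !![0, 1; -1, 0]

/-- `diagJ k` is the `2k × 2k` block-diagonal real matrix with `k` copies of `J`. -/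
def diagJ (k : ℕ) : Matrix (Fin (2 * k)) (Fin (2 * k)) ℝ :=
  Matrix.of fun i j =>
    if i.val / 2 = j.val / 2 then
      Jmat ⟨i.val % 2, Nat.mod_lt _ two_pos⟩ ⟨j.val % 2, Nat.mod_lt _ two_pos⟩
    else 0

def JJ (s : ℕ) : Matrix (Fin s) (Fin s) ℝ :=
  Matrix.of fun i j =>
    if (i : ℕ) / 2 = (j : ℕ) / 2 ∧ (i : ℕ) % 2 = 0 ∧ (j : ℕ) % 2 = 1 then 1
    else if (i : ℕ) / 2 = (j : ℕ) / 2 ∧ (i : ℕ) % 2 = 1 ∧ (j : ℕ) % 2 = 0 then -1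
    else 0

lemma JJ_skew (s : ℕ) : (JJ s)ᵀ = -(JJ s) := by
  ext i j
  simp only [JJ, transpose_apply, Matrix.neg_apply, Matrix.of_apply]
  split_ifs <;> (try norm_num) <;> omega

lemma JJ_mul_transpose (k : ℕ) : JJ (2 * k) * (JJ (2 * k))ᵀ = 1 := by
  ext i j
  rw [Matrix.mul_apply]
  have hp : 2 * ((i : ℕ) / 2) + (1 - (i : ℕ) % 2) < 2 * k := by omega
  rw [Finset.sum_eq_single (⟨2 * ((i : ℕ) / 2) + (1 - (i : ℕ) % 2), hp⟩ : Fin (2 * k))]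
  · simp only [JJ, transpose_apply, Matrix.of_apply, Matrix.one_apply]
    by_cases hij : i = j
    · subst hij
      split_ifs <;> (try norm_num) <;> omega
    · have : (i : ℕ) ≠ (j : ℕ) := fun h => hij (Fin.ext h)
      split_ifs <;> (try norm_num) <;> omega
  · intro l _ hl
    have : (l : ℕ) ≠ 2 * ((i : ℕ) / 2) + (1 - (i : ℕ) % 2) := fun h => hl (Fin.ext h)
    simp only [JJ, transpose_apply, Matrix.of_apply]
    split_ifs <;> (try norm_num) <;> omega
  · intro h; exact absurd (Finset.mem_univ _) h

lemma isUnit_JJ_det (k : ℕ) : IsUnit (JJ (2 * k)).det := by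
  have h := JJ_mul_transpose k
  have : (JJ (2 * k)).det * (JJ (2 * k))ᵀ.det = 1 := by
    rw [← det_mul, h, det_one]
  exact IsUnit.of_mul_eq_one _ this

lemma diagJ_eq (k : ℕ) : diagJ k = JJ (2 * k) := by
  ext i j
  simp only [diagJ, JJ, Matrix.of_apply]
  rcases Nat.mod_two_eq_zero_or_one (i : ℕ) with hi | hi <;>
    rcases Nat.mod_two_eq_zero_or_one (j : ℕ) with hj | hj <;>
      simp only [hi, hj, Jmat] <;> split_ifs with h1 h2 h3 <;>
        simp_all [Fin.mk.injEq, Matrix.cons_val_zero, Matrix.cons_val_one] <;> omega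

lemma JJ_fromBlocks {a b s : ℕ} (hab : a + b = s) (ha : a % 2 = 0) :
    (JJ s).submatrix (finSumFinEquiv.trans (finCongr hab)) (finSumFinEquiv.trans (finCongr hab))
      = fromBlocks (JJ a) (0 : Matrix (Fin a) (Fin b) ℝ)
          (0 : Matrix (Fin b) (Fin a) ℝ) (JJ b) := by
  ext i j
  rcases i with (⟨i, hi⟩ | ⟨i, hi⟩) <;> rcases j with (⟨j, hj⟩ | ⟨j, hj⟩) <;>
    simp only [submatrix_apply, Equiv.trans_apply, finCongr_apply,
      finSumFinEquiv_apply_left, finSumFinEquiv_apply_right, JJ, Matrix.of_apply,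
      fromBlocks_apply₁₁, fromBlocks_apply₁₂, fromBlocks_apply₂₁, fromBlocks_apply₂₂,
      Fin.coe_cast, Fin.coe_castAdd, Fin.coe_natAdd, Matrix.zero_apply] <;>
    split_ifs <;> first | rfl | (exfalso; omega)

lemma exists_complement {r s : ℕ} (B : Matrix (Fin s) (Fin s) ℝ)
    (hB : Bᵀ = -B) (hBdet : IsUnit B.det)
    (D : Matrix (Fin r) (Fin s) ℝ) (G : Matrix (Fin r) (Fin r) ℝ)
    (hGdet : IsUnit G.det) (hD : D * B * Dᵀ = G) :
    ∃ M : Matrix (Fin (s - r)) (Fin s) ℝ,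
      M * B * Dᵀ = 0 ∧ D * B * Mᵀ = 0 ∧ IsUnit (M * B * Mᵀ).det := by
  have hGskew : Gᵀ = -G := by
    rw [← hD, transpose_mul, transpose_mul, transpose_transpose, hB]
    simp [Matrix.mul_assoc]
  have hGG : G * G⁻¹ = 1 := mul_nonsing_inv G hGdet
  have hGiG : G⁻¹ * G = 1 := nonsing_inv_mul G hGdet
  have hGiT : (G⁻¹)ᵀ = -G⁻¹ := by
    rw [transpose_nonsing_inv, hGskew]
    refine inv_eq_right_inv ?_
    rw [Matrix.neg_mul, Matrix.mul_neg, neg_neg, hGG]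
  set K : Matrix (Fin s) (Fin r) ℝ := B * Dᵀ * G⁻¹ with hK
  have hDK : D * K = 1 := by
    rw [hK, ← Matrix.mul_assoc, ← Matrix.mul_assoc, hD, hGG]
  set A : Matrix (Fin s) (Fin s) ℝ := K * D with hA
  set Q : Matrix (Fin s) (Fin s) ℝ := 1 - A with hQ
  have hQBD : Q * (B * Dᵀ) = 0 := by
    rw [hQ, Matrix.sub_mul, Matrix.one_mul, hA, Matrix.mul_assoc, ← Matrix.mul_assoc D B Dᵀ,
      hD, hK, Matrix.mul_assoc (B * Dᵀ), hGiG, Matrix.mul_one, sub_self]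
  have hKT : Kᵀ = G⁻¹ * D * B := by
    rw [hK, transpose_mul, transpose_mul, transpose_transpose, hB, hGiT]
    simp [Matrix.mul_neg, Matrix.neg_mul, Matrix.mul_assoc]
  have hAB : A * B = B * Aᵀ := by
    rw [hA, transpose_mul, hKT, hK]
    rw [Matrix.mul_assoc, Matrix.mul_assoc, Matrix.mul_assoc, Matrix.mul_assoc]
  have hAA : A * A = A := by
    rw [hA, Matrix.mul_assoc, ← Matrix.mul_assoc D, hDK, Matrix.one_mul]
  have hrankA : A.rank = r := by
    have h1 : A.rank ≤ r := le_trans (rank_mul_le_left K D) (by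
      simpa using rank_le_width K)
    have hAK : A * K = K := by rw [hA, Matrix.mul_assoc, hDK, Matrix.mul_one]
    have h2 : r ≤ A.rank := by
      have e1 : (1 : Matrix (Fin r) (Fin r) ℝ) = D * (A * K) := by rw [hAK, hDK]
      calc r = (1 : Matrix (Fin r) (Fin r) ℝ).rank := by simp [rank_one]
        _ = (D * (A * K)).rank := by rw [← e1]
        _ ≤ (A * K).rank := rank_mul_le_right _ _
        _ ≤ A.rank := rank_mul_le_left _ _
    omega
  have hQT : Qᵀ = 1 - Aᵀ := by rw [hQ, transpose_sub, transpose_one]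
  have hATQT : Aᵀ * Qᵀ = 0 := by
    rw [hQT, Matrix.mul_sub, Matrix.mul_one, ← transpose_mul, hAA, sub_self]
  set V : Submodule ℝ (Fin s → ℝ) := LinearMap.ker (Aᵀ).mulVecLin with hV
  have hmemV : ∀ x : Fin s → ℝ, x ∈ V ↔ Aᵀ *ᵥ x = 0 := fun x => LinearMap.mem_ker
  have hfixV : ∀ x : Fin s → ℝ, x ∈ V → Qᵀ *ᵥ x = x := by
    intro x hx
    rw [hQT, Matrix.sub_mulVec, Matrix.one_mulVec, (hmemV x).mp hx, sub_zero]
  have hQV : ∀ x : Fin s → ℝ, Qᵀ *ᵥ x ∈ V := by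
    intro x
    rw [hmemV, mulVec_mulVec, hATQT, Matrix.zero_mulVec]
  have hdim : Module.finrank ℝ V = s - r := by
    have hrn := LinearMap.finrank_range_add_finrank_ker ((Aᵀ).mulVecLin :
      (Fin s → ℝ) →ₗ[ℝ] (Fin s → ℝ))
    have h1 : Module.finrank ℝ (Fin s → ℝ) = s := by simp
    have h2 : Module.finrank ℝ (LinearMap.range (Aᵀ).mulVecLin) = r := by
      have h3 : (Aᵀ).rank = r := by rw [rank_transpose, hrankA]
      rw [← h3]; rfl
    have h4 : A.rank ≤ s := by
      have := rank_le_width A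
      omega
    rw [hV]
    omega
  set b : Module.Basis (Fin (s - r)) ℝ V := (Module.finBasis ℝ V).reindex (finCongr hdim) with hb
  set M : Matrix (Fin (s - r)) (Fin s) ℝ := Matrix.of (fun i j => (b i : Fin s → ℝ) j) with hM
  have hMrow : ∀ i, (fun j => M i j) = ((b i : Fin s → ℝ)) := fun i => rfl
  have hMrowV : ∀ i, (fun j => M i j) ∈ V := fun i => by rw [hMrow i]; exact (b i).2
  have hsum : ∀ c : Fin (s - r) → ℝ, Mᵀ *ᵥ c = ∑ i, c i • ((b i : Fin s → ℝ)) := by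
    intro c
    funext j
    rw [Finset.sum_apply]
    simp only [Pi.smul_apply, smul_eq_mul]
    rw [Matrix.mulVec, dotProduct]
    refine Finset.sum_congr rfl fun i _ => ?_
    rw [Matrix.transpose_apply, mul_comm]
    rfl
  have hMBD : M * B * Dᵀ = 0 := by
    rw [Matrix.mul_assoc]
    ext i l
    have hyrow : (fun j => M i j) = (fun j => M i j) ᵥ* Q := by
      conv_lhs => rw [← hfixV _ (hMrowV i)]
      rw [mulVec_transpose]
    have h5 : (M * (B * Dᵀ)) i l = ((fun j => M i j) ᵥ* (B * Dᵀ)) l := by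
      simp [Matrix.mul_apply, Matrix.vecMul, dotProduct]
    rw [h5]
    conv_lhs => rw [hyrow]
    rw [vecMul_vecMul, hQBD]
    simp
  have hDBM : D * B * Mᵀ = 0 := by
    have h1 : (M * B * Dᵀ)ᵀ = (0 : Matrix (Fin r) (Fin (s - r)) ℝ) := by
      rw [hMBD, transpose_zero]
    rw [transpose_mul, transpose_mul, transpose_transpose, hB, Matrix.neg_mul,
      Matrix.mul_neg, neg_eq_zero, ← Matrix.mul_assoc] at h1
    exact h1
  have hcoe : ∀ d : Fin (s - r) → ℝ,
      ((∑ i, d i • b i : V) : Fin s → ℝ) = ∑ i, d i • ((b i : Fin s → ℝ)) := by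
    intro d
    have h9 : ((∑ i, d i • b i : V) : Fin s → ℝ) = V.subtype (∑ i, d i • b i) := rfl
    rw [h9, map_sum]
    rfl
  have hnd : (M * B * Mᵀ).Nondegenerate := by
    rw [Matrix.nondegenerate_iff_separatingLeft]
    intro c hc
    set u := Mᵀ *ᵥ c with hu
    have hucM : u = c ᵥ* M := by rw [hu, mulVec_transpose]
    have huV : u ∈ V := by
      rw [hu, hsum c]
      exact Submodule.sum_mem _ fun i _ => Submodule.smul_mem _ _
        (by rw [← hMrow i]; exact hMrowV i)
    have huBD : u ᵥ* (B * Dᵀ) = 0 := by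
      rw [hucM, vecMul_vecMul, ← Matrix.mul_assoc, hMBD, Matrix.vecMul_zero]
    have claim1 : ∀ y, y ∈ V → u ⬝ᵥ (B *ᵥ y) = 0 := by
      intro y hy
      obtain ⟨d, hd⟩ : ∃ d, Mᵀ *ᵥ d = y := by
        refine ⟨fun i => (b.repr ⟨y, hy⟩) i, ?_⟩
        rw [hsum]
        have h3 : ((∑ i, (b.repr ⟨y, hy⟩) i • b i : V) : Fin s → ℝ) = y := by
          rw [b.sum_repr ⟨y, hy⟩]
        exact (hcoe _).symm.trans h3
      rw [← hd, hucM]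
      rw [mulVec_mulVec, ← Matrix.dotProduct_mulVec, mulVec_mulVec, ← Matrix.mul_assoc]
      convert hc d
      rfl
    have hall : ∀ x, u ⬝ᵥ (B *ᵥ x) = 0 := by
      intro x
      have hsplit : B *ᵥ x = B *ᵥ (Aᵀ *ᵥ x) + B *ᵥ (Qᵀ *ᵥ x) := by
        rw [mulVec_mulVec, mulVec_mulVec, ← Matrix.add_mulVec, ← Matrix.mul_add, hQT]
        simp
      rw [hsplit, dotProduct_add]
      have t2 : u ⬝ᵥ (B *ᵥ (Qᵀ *ᵥ x)) = 0 := claim1 _ (hQV x)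
      have t1 : u ⬝ᵥ (B *ᵥ (Aᵀ *ᵥ x)) = 0 := by
        rw [mulVec_mulVec, ← hAB, Matrix.dotProduct_mulVec]
        have huK : u ᵥ* K = 0 := by
          rw [hK, ← vecMul_vecMul, huBD, Matrix.zero_vecMul]
        have h7 : u ᵥ* (A * B) = 0 := by
          rw [hA, Matrix.mul_assoc, ← vecMul_vecMul, huK, Matrix.zero_vecMul]
        rw [h7, zero_dotProduct]
      rw [t1, t2, add_zero]
    have huB : u ᵥ* B = 0 := by
      funext j
      have h6 := hall (Pi.single j 1)
      rw [mulVec_single] at h6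
      simpa [Matrix.vecMul, dotProduct] using h6
    have hu0 : u = 0 := by
      have h4 : u ᵥ* (B * B⁻¹) = 0 := by rw [← vecMul_vecMul, huB, Matrix.zero_vecMul]
      rwa [mul_nonsing_inv _ hBdet, Matrix.vecMul_one] at h4
    have h5 : (∑ i, c i • b i : V) = 0 := by
      apply Subtype.val_injective
      have h8 : ((∑ i, c i • b i : V) : Fin s → ℝ) = Mᵀ *ᵥ c := by
        rw [hcoe, hsum]
      rw [h8, ← hu, hu0]
      rfl
    have h6 := Fintype.linearIndependent_iff.mp b.linearIndependent c h5
    funext i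
    exact h6 i
  exact ⟨M, hMBD, hDBM, isUnit_iff_ne_zero.mpr (nondegenerate_iff_det_ne_zero.mp hnd)⟩

lemma isUnit_JJ_two_det : IsUnit (JJ 2).det := by
  have h : (JJ 2).det = 1 := by
    rw [Matrix.det_fin_two]
    norm_num [JJ]
  rw [h]; exact isUnit_one

lemma skew_to_JJ : ∀ s : ℕ, ∀ B : Matrix (Fin s) (Fin s) ℝ, Bᵀ = -B → IsUnit B.det →
    ∃ C : Matrix (Fin s) (Fin s) ℝ, C * B * Cᵀ = JJ s := by
  intro s
  induction s using Nat.strong_induction_on with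
  | _ s ih =>
    match s with
    | 0 =>
      intro B hB hdet
      exact ⟨1, Subsingleton.elim _ _⟩
    | 1 =>
      intro B hB hdet
      exfalso
      have h0 : B 0 0 = 0 := by
        have h := congrFun (congrFun hB 0) 0
        simp only [transpose_apply, Matrix.neg_apply] at h
        linarith
      have hd : B.det = 0 := by rw [Matrix.det_fin_one, h0]
      rw [hd] at hdet
      exact (by norm_num : ¬ IsUnit (0:ℝ)) hdet
    | (t+2) =>
      intro B hB hdet
      have hskew : ∀ p q, B q p = - B p q := by
        intro p q
        have h := congrFun (congrFun hB p) q
        simpa using h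
      obtain ⟨j, hj⟩ : ∃ j, B 0 j ≠ 0 := by
        by_contra h
        push_neg at h
        rw [Matrix.det_eq_zero_of_row_eq_zero 0 h] at hdet
        exact (by norm_num : ¬ IsUnit (0:ℝ)) hdet
      set U : Matrix (Fin 2) (Fin (t+2)) ℝ := Matrix.of (fun a l =>
        if a = 0 then (if l = 0 then 1 else 0) else (if l = j then (B 0 j)⁻¹ else 0)) with hU
      have hUB : ∀ (a : Fin 2) q, (U * B) a q =
          if a = 0 then B 0 q else (B 0 j)⁻¹ * B j q := by
        intro a q
        rw [Matrix.mul_apply]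
        by_cases ha : a = 0 <;>
          simp [hU, ha, ite_mul, Finset.sum_ite_eq, Finset.sum_ite_eq']
      have hdiag0 : B 0 0 = 0 := by have := hskew 0 0; linarith
      have hdiagj : B j j = 0 := by have := hskew j j; linarith
      have hJJ00 : JJ 2 0 0 = 0 := by norm_num [JJ]
      have hJJ01 : JJ 2 0 1 = 1 := by norm_num [JJ]
      have hJJ10 : JJ 2 1 0 = -1 := by norm_num [JJ]
      have hJJ11 : JJ 2 1 1 = 0 := by norm_num [JJ]
      have hUBU : U * B * Uᵀ = JJ 2 := by
        ext a c
        rw [Matrix.mul_apply]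
        by_cases hc0 : c = 0
        · have hUt : ∀ q, Uᵀ q c = if q = 0 then (1:ℝ) else 0 := by
            intro q; rw [transpose_apply, hU]; simp [hc0]
          simp only [hUt, mul_ite, mul_one, mul_zero]
          rw [Finset.sum_ite_eq' Finset.univ (0 : Fin (t+2)) (fun q => (U * B) a q)]
          simp only [Finset.mem_univ, if_true]
          rw [hUB]
          by_cases ha0 : a = 0
          · rw [if_pos ha0, ha0, hc0, hJJ00, hdiag0]
          · have ha1 : a = 1 := by omega
            rw [if_neg ha0, ha1, hc0, hJJ10, hskew 0 j]
            field_simp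
        · have hc1 : c = 1 := by omega
          have hUt : ∀ q, Uᵀ q c = if q = j then (B 0 j)⁻¹ else 0 := by
            intro q; rw [transpose_apply, hU]; simp [hc0]
          simp only [hUt, mul_ite, mul_zero]
          rw [Finset.sum_ite_eq' Finset.univ j (fun q => (U * B) a q * (B 0 j)⁻¹)]
          simp only [Finset.mem_univ, if_true]
          rw [hUB]
          by_cases ha0 : a = 0
          · rw [if_pos ha0, ha0, hc1, hJJ01]
            field_simp
          · have ha1 : a = 1 := by omega
            rw [if_neg ha0, ha1, hc1, hJJ11, hdiagj]
            ring
      obtain ⟨M, hMBU, hUBM, hMdet⟩ :=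
        exists_complement B hB hdet U (JJ 2) isUnit_JJ_two_det hUBU
      have hskewM : (M * B * Mᵀ)ᵀ = -(M * B * Mᵀ) := by
        rw [transpose_mul, transpose_mul, transpose_transpose, hB, Matrix.neg_mul,
          Matrix.mul_neg, Matrix.mul_assoc]
      obtain ⟨C', hC'⟩ := ih (t + 2 - 2) (by omega) (M * B * Mᵀ) hskewM hMdet
      have hab : 2 + (t + 2 - 2) = t + 2 := by omega
      set e : Fin 2 ⊕ Fin (t + 2 - 2) ≃ Fin (t + 2) :=
        finSumFinEquiv.trans (finCongr hab) with he
      refine ⟨(fromRows U (C' * M)).submatrix e.symm id, ?_⟩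
      have h1 : (fromRows U (C' * M)).submatrix e.symm id * B *
          ((fromRows U (C' * M)).submatrix e.symm id)ᵀ =
          (fromRows U (C' * M) * B * (fromRows U (C' * M))ᵀ).submatrix e.symm e.symm := by
        rw [transpose_submatrix]
        rw [Matrix.submatrix_mul (fromRows U (C' * M) * B) ((fromRows U (C' * M))ᵀ)
          e.symm id e.symm Function.bijective_id]
        rw [Matrix.submatrix_mul (fromRows U (C' * M)) B e.symm id id Function.bijective_id,
          Matrix.submatrix_id_id]
      rw [h1]
      have hUBM' : U * (B * Mᵀ) = 0 := by rw [← Matrix.mul_assoc, hUBM]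
      have hMBU' : M * (B * Uᵀ) = 0 := by rw [← Matrix.mul_assoc, hMBU]
      have e12 : U * B * (C' * M)ᵀ = 0 := by
        rw [transpose_mul, Matrix.mul_assoc, ← Matrix.mul_assoc B Mᵀ C'ᵀ,
          ← Matrix.mul_assoc U (B * Mᵀ) C'ᵀ, hUBM', Matrix.zero_mul]
      have e21 : C' * M * B * Uᵀ = 0 := by
        rw [Matrix.mul_assoc, Matrix.mul_assoc, hMBU', Matrix.mul_zero]
      have e22 : C' * M * B * (C' * M)ᵀ = JJ (t + 2 - 2) := by
        have h := hC'
        simp only [transpose_mul, Matrix.mul_assoc] at h ⊢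
        exact h
      have h2 : fromRows U (C' * M) * B * (fromRows U (C' * M))ᵀ =
          fromBlocks (JJ 2) 0 0 (JJ (t + 2 - 2)) := by
        rw [transpose_fromRows, fromRows_mul, fromRows_mul_fromCols, hUBU, e12, e21, e22]
      rw [h2, ← JJ_fromBlocks hab (by norm_num), ← he, Matrix.submatrix_submatrix,
        Equiv.self_comp_symm, Matrix.submatrix_id_id]

/-- Any matrix `D_q` with `D_q Θ_w D_qᵀ = Θ_yq` can be completed by an `N` so that the stacked
matrix `Ṽ = [D_q; N]` is symplectic: `Ṽ Θ_w Ṽᵀ = Θ_w`. -/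
theorem symplectic_completion (m n_yq : ℕ) (hyq : n_yq ≤ m)
    (Dq : Matrix (Fin (2 * n_yq)) (Fin (2 * m)) ℝ)
    (hDq : Dq * diagJ m * Dqᵀ = diagJ n_yq) :
    ∃ N : Matrix (Fin (2 * m - 2 * n_yq)) (Fin (2 * m)) ℝ,
      Matrix.fromRows Dq N * diagJ m * (Matrix.fromRows Dq N)ᵀ =
        (diagJ m).submatrix
          (finSumFinEquiv.trans (finCongr (by omega : 2 * n_yq + (2 * m - 2 * n_yq) = 2 * m)))
          (finSumFinEquiv.trans (finCongr (by omega : 2 * n_yq + (2 * m - 2 * n_yq) = 2 * m))) := by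
  have hBskew : (diagJ m)ᵀ = -(diagJ m) := by rw [diagJ_eq]; exact JJ_skew _
  have hBdet : IsUnit (diagJ m).det := by rw [diagJ_eq]; exact isUnit_JJ_det m
  have hGdet : IsUnit (diagJ n_yq).det := by rw [diagJ_eq]; exact isUnit_JJ_det n_yq
  obtain ⟨M, hMBD, hDBM, hMdet⟩ :=
    exists_complement (diagJ m) hBskew hBdet Dq (diagJ n_yq) hGdet hDq
  have hskewM : (M * diagJ m * Mᵀ)ᵀ = -(M * diagJ m * Mᵀ) := by
    rw [transpose_mul, transpose_mul, transpose_transpose, hBskew, Matrix.neg_mul,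
      Matrix.mul_neg, Matrix.mul_assoc]
  obtain ⟨C, hC⟩ := skew_to_JJ (2 * m - 2 * n_yq) (M * diagJ m * Mᵀ) hskewM hMdet
  refine ⟨C * M, ?_⟩
  have hDBM' : Dq * (diagJ m * Mᵀ) = 0 := by rw [← Matrix.mul_assoc, hDBM]
  have hMBD' : M * (diagJ m * Dqᵀ) = 0 := by rw [← Matrix.mul_assoc, hMBD]
  have e12 : Dq * diagJ m * (C * M)ᵀ = 0 := by
    rw [transpose_mul, Matrix.mul_assoc, ← Matrix.mul_assoc (diagJ m) Mᵀ Cᵀ,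
      ← Matrix.mul_assoc Dq (diagJ m * Mᵀ) Cᵀ, hDBM', Matrix.zero_mul]
  have e21 : C * M * diagJ m * Dqᵀ = 0 := by
    rw [Matrix.mul_assoc, Matrix.mul_assoc, hMBD', Matrix.mul_zero]
  have e22 : C * M * diagJ m * (C * M)ᵀ = JJ (2 * m - 2 * n_yq) := by
    have h := hC
    simp only [transpose_mul, Matrix.mul_assoc] at h ⊢
    exact h
  rw [transpose_fromRows, fromRows_mul, fromRows_mul_fromCols, hDq, e12, e21, e22]
  rw [diagJ_eq n_yq, diagJ_eq m]
  exact (JJ_fromBlocks _ (by omega)).symm
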